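/- Let A be a finite-dimensional Hopf algebra over a field k, let λ : A → k be a left integral in the dual, and let Λ ∈ A be a right integral with λ(Λ) = 1. Then λ(1) · ε(Λ) equals the trace of the k-linear endomorphism S ∘ S of A. Consequently, the invariant of the trivial genus-1 handlebody-knot, given by λ(S(Λ₍₁₎) Λ₍₂₎), equals Trace(S²), and equals (dim_k A)·1 when S is an involution. -/

import Mathlib

open scoped TensorProduct

namespace HopfAux

open Coalgebra HopfAlgebra TensorProduct LinearMap

variable {k A : Type*} [CommRing k] [Ring A] [HopfAlgebra k A] {ι κ : Type*}

/-- product representation -/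
noncomputable def mulRepr {a b : A} (r : Repr k a ι) (s : Repr k b κ) : Repr k (a * b) (ι × κ) where
  index := r.index ×ˢ s.index
  left := fun p => r.left p.1 * s.left p.2
  right := fun p => r.right p.1 * s.right p.2
  eq := by
    rw [Finset.sum_product]
    rw [Bialgebra.comul_mul, ← r.eq, ← s.eq, Finset.sum_mul_sum]
    simp only [Algebra.TensorProduct.tmul_mul_tmul]

@[simp] lemma mulRepr_index {a b : A} (r : Repr k a ι) (s : Repr k b κ) :
    (mulRepr r s).index = r.index ×ˢ s.index := rfl
@[simp] lemma mulRepr_left {a b : A} (r : Repr k a ι) (s : Repr k b κ) (p) :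
    (mulRepr r s).left p = r.left p.1 * s.left p.2 := rfl
@[simp] lemma mulRepr_right {a b : A} (r : Repr k a ι) (s : Repr k b κ) (p) :
    (mulRepr r s).right p = r.right p.1 * s.right p.2 := rfl

lemma repr_sum_eps_left {a : A} (r : Repr k a ι) :
    ∑ i ∈ r.index, counit (R := k) (r.left i) • r.right i = a := by
  have h := congrArg (TensorProduct.lid k A) (sum_counit_tmul_eq (R := k) r)
  rw [map_sum] at h
  simp only [_root_.TensorProduct.lid_tmul, one_smul] at h
  exact h

lemma repr_sum_eps_right {a : A} (r : Repr k a ι) :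
    ∑ i ∈ r.index, counit (R := k) (r.right i) • r.left i = a := by
  have h := congrArg (TensorProduct.rid k A) (sum_tmul_counit_eq (R := k) r)
  rw [map_sum] at h
  simp only [_root_.TensorProduct.rid_tmul, one_smul] at h
  exact h

lemma antipode_one' : antipode (R := k) (1 : A) = 1 := by
  have h := mul_antipode_rTensor_comul_apply (R := k) (a := (1 : A))
  rw [Bialgebra.comul_one] at h
  simpa [Algebra.TensorProduct.one_def] using h

lemma counit_algebraMap (c : k) : counit (R := k) (algebraMap k A c) = c := by
  rw [Algebra.algebraMap_eq_smul_one, map_smul, Bialgebra.counit_one, smul_eq_mul, mul_one]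

lemma counit_antipode' (a : A) :
    counit (R := k) (antipode (R := k) a) = counit (R := k) a := by
  obtain r := ℛ k a
  have h := congrArg (counit (R := k)) (sum_antipode_mul_eq_algebraMap_counit (R := k) r)
  rw [map_sum, counit_algebraMap] at h
  simp only [Bialgebra.counit_mul] at h
  calc counit (R := k) (antipode (R := k) a)
      = counit (R := k) (antipode (R := k) (∑ i ∈ r.index, counit (R := k) (r.right i) • r.left i)) := by
        rw [repr_sum_eps_right]
    _ = ∑ i ∈ r.index, counit (R := k) (antipode (R := k) (r.left i)) * counit (R := k) (r.right i) := by
        rw [map_sum, map_sum]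
        refine Finset.sum_congr rfl fun i _ => ?_
        rw [map_smul, map_smul, smul_eq_mul, mul_comm]
    _ = counit (R := k) a := h



/-- The candidate for `comul ∘ antipode`. -/
noncomputable def Gm : A →ₗ[k] A ⊗[k] A :=
  (TensorProduct.map (antipode (R := k)) (antipode (R := k))) ∘ₗ
    (TensorProduct.comm k A A).toLinearMap ∘ₗ (Coalgebra.comul (R := k))

lemma Gm_apply {x : A} (r : Repr k x ι) :
    Gm (k := k) x = ∑ i ∈ r.index,
      antipode (R := k) (r.right i) ⊗ₜ[k] antipode (R := k) (r.left i) := by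
  rw [Gm]
  simp only [comp_apply, LinearEquiv.coe_coe]
  rw [← r.eq, map_sum, map_sum]
  simp only [_root_.TensorProduct.comm_tmul, _root_.TensorProduct.map_tmul]

lemma sum_comul_mul_G {v : A} (r : Repr k v ι) :
    ∑ i ∈ r.index, Coalgebra.comul (R := k) (r.left i) * Gm (k := k) (r.right i) =
      Coalgebra.counit (R := k) v • (1 : A ⊗[k] A) := by
  classical
  set Sa := antipode (R := k) (A := A) with hSa
  let rl : ∀ i : r.ι, Repr k (r.left i) (A × A) := fun i => ℛ k _
  let rr : ∀ i : r.ι, Repr k (r.right i) (A × A) := fun i => ℛ k _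
  let Ξ : A ⊗[k] (A ⊗[k] A) →ₗ[k] A ⊗[k] A :=
    (LinearMap.mul' k (A ⊗[k] A)) ∘ₗ (TensorProduct.map LinearMap.id (Gm (k := k))) ∘ₗ
      (TensorProduct.assoc k A A A).symm.toLinearMap
  have hΞ : ∀ (x y z : A), Ξ (x ⊗ₜ[k] (y ⊗ₜ[k] z)) = (x ⊗ₜ[k] y) * Gm (k := k) z := by
    intro x y z
    simp only [Ξ, comp_apply, LinearEquiv.coe_coe, _root_.TensorProduct.assoc_symm_tmul,
      _root_.TensorProduct.map_tmul, id_coe, id_eq, mul'_apply]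
  have key := sum_tmul_tmul_eq r rl rr
  have e1 : ∑ i ∈ r.index, Coalgebra.comul (R := k) (r.left i) * Gm (k := k) (r.right i)
      = Ξ (∑ i ∈ r.index, ∑ j ∈ (rl i).index,
          (rl i).left j ⊗ₜ[k] ((rl i).right j ⊗ₜ[k] r.right i)) := by
    rw [map_sum]
    refine Finset.sum_congr rfl fun i _ => ?_
    rw [map_sum]
    simp only [hΞ]
    rw [← Finset.sum_mul, (rl i).eq]
  rw [e1, key, map_sum]
  -- second regrouping, separately for each `i`
  have e2 : ∀ i ∈ r.index,
      Ξ (∑ j ∈ (rr i).index, r.left i ⊗ₜ[k] ((rr i).left j ⊗ₜ[k] (rr i).right j))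
        = (r.left i * Sa (r.right i)) ⊗ₜ[k] (1 : A) := by
    intro i _
    set rrr : ∀ j : (rr i).ι, Repr k ((rr i).right j) (A × A) := fun j => ℛ k _ with hrrr
    set L : ∀ j : (rr i).ι, Repr k ((rr i).left j) (A × A) := fun j => ℛ k _ with hL
    let Φ : A ⊗[k] (A ⊗[k] A) →ₗ[k] A ⊗[k] A :=
      (TensorProduct.comm k A A).toLinearMap ∘ₗ
        (TensorProduct.map ((LinearMap.mul' k A) ∘ₗ (LinearMap.lTensor A Sa))
          ((LinearMap.mulLeft k (r.left i)) ∘ₗ Sa)) ∘ₗ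
        (TensorProduct.assoc k A A A).symm.toLinearMap
    have hΦ : ∀ (u x y : A), Φ (u ⊗ₜ[k] (x ⊗ₜ[k] y))
        = (r.left i * Sa y) ⊗ₜ[k] (u * Sa x) := by
      intro u x y
      simp only [Φ, comp_apply, LinearEquiv.coe_coe, _root_.TensorProduct.assoc_symm_tmul,
        _root_.TensorProduct.map_tmul, lTensor_tmul, mul'_apply, mulLeft_apply,
        _root_.TensorProduct.comm_tmul]
    have key2 := sum_tmul_tmul_eq (rr i) L rrr
    calc Ξ (∑ j ∈ (rr i).index, r.left i ⊗ₜ[k] ((rr i).left j ⊗ₜ[k] (rr i).right j))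
        = ∑ j ∈ (rr i).index, (r.left i ⊗ₜ[k] (rr i).left j) * Gm (k := k) ((rr i).right j) := by
          rw [map_sum]; exact Finset.sum_congr rfl fun j _ => hΞ _ _ _
      _ = ∑ j ∈ (rr i).index, ∑ m ∈ (rrr j).index,
            (r.left i * Sa ((rrr j).right m)) ⊗ₜ[k] ((rr i).left j * Sa ((rrr j).left m)) := by
          refine Finset.sum_congr rfl fun j _ => ?_
          rw [Gm_apply (rrr j), Finset.mul_sum]
          exact Finset.sum_congr rfl fun m _ => by
            rw [Algebra.TensorProduct.tmul_mul_tmul]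
      _ = Φ (∑ j ∈ (rr i).index, ∑ m ∈ (rrr j).index,
            (rr i).left j ⊗ₜ[k] ((rrr j).left m ⊗ₜ[k] (rrr j).right m)) := by
          rw [map_sum]
          refine Finset.sum_congr rfl fun j _ => ?_
          rw [map_sum]
          exact Finset.sum_congr rfl fun m _ => (hΦ _ _ _).symm
      _ = Φ (∑ j ∈ (rr i).index, ∑ m ∈ (L j).index,
            (L j).left m ⊗ₜ[k] ((L j).right m ⊗ₜ[k] (rr i).right j)) := by rw [key2]
      _ = ∑ j ∈ (rr i).index, ∑ m ∈ (L j).index,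
            (r.left i * Sa ((rr i).right j)) ⊗ₜ[k] ((L j).left m * Sa ((L j).right m)) := by
          rw [map_sum]
          exact Finset.sum_congr rfl fun j _ => by
            rw [map_sum]; exact Finset.sum_congr rfl fun m _ => hΦ _ _ _
      _ = ∑ j ∈ (rr i).index, Coalgebra.counit (R := k) ((rr i).left j) •
            ((r.left i * Sa ((rr i).right j)) ⊗ₜ[k] (1 : A)) := by
          refine Finset.sum_congr rfl fun j _ => ?_
          rw [← tmul_sum, sum_mul_antipode_eq_smul (L j), tmul_smul]
      _ = (r.left i * Sa (r.right i)) ⊗ₜ[k] (1 : A) := by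
          simp only [smul_tmul']
          rw [← sum_tmul]
          congr 1
          calc ∑ j ∈ (rr i).index, Coalgebra.counit (R := k) ((rr i).left j) •
                  (r.left i * Sa ((rr i).right j))
              = r.left i * Sa (∑ j ∈ (rr i).index,
                  Coalgebra.counit (R := k) ((rr i).left j) • (rr i).right j) := by
                rw [map_sum, Finset.mul_sum]
                exact Finset.sum_congr rfl fun j _ => by
                  rw [map_smul, mul_smul_comm]
            _ = r.left i * Sa (r.right i) := by rw [repr_sum_eps_left]
  calc ∑ i ∈ r.index,
        Ξ (∑ j ∈ (rr i).index, r.left i ⊗ₜ[k] ((rr i).left j ⊗ₜ[k] (rr i).right j))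
      = ∑ i ∈ r.index, (r.left i * Sa (r.right i)) ⊗ₜ[k] (1 : A) :=
        Finset.sum_congr rfl e2
    _ = (∑ i ∈ r.index, r.left i * Sa (r.right i)) ⊗ₜ[k] (1 : A) := by rw [← sum_tmul]
    _ = Coalgebra.counit (R := k) v • (1 : A ⊗[k] A) := by
        rw [sum_mul_antipode_eq_smul r, Algebra.TensorProduct.one_def, smul_tmul']

lemma comul_antipode' (x : A) :
    Coalgebra.comul (R := k) (antipode (R := k) x) = Gm (k := k) x := by
  classical
  let r : Repr k x (A × A) := ℛ k x
  let rl : ∀ i : r.ι, Repr k (r.left i) (A × A) := fun i => ℛ k _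
  let rr : ∀ i : r.ι, Repr k (r.right i) (A × A) := fun i => ℛ k _
  let Ω : A ⊗[k] (A ⊗[k] A) →ₗ[k] A ⊗[k] A :=
    (LinearMap.mul' k (A ⊗[k] A)) ∘ₗ
      (TensorProduct.map ((Coalgebra.comul (R := k)) ∘ₗ (antipode (R := k)))
        ((LinearMap.mul' k (A ⊗[k] A)) ∘ₗ
          TensorProduct.map (Coalgebra.comul (R := k)) (Gm (k := k))))
  have hΩ : ∀ (x₁ x₂ x₃ : A), Ω (x₁ ⊗ₜ[k] (x₂ ⊗ₜ[k] x₃)) =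
      Coalgebra.comul (R := k) (antipode (R := k) x₁) *
        (Coalgebra.comul (R := k) x₂ * Gm (k := k) x₃) := by
    intro x₁ x₂ x₃
    simp only [Ω, comp_apply, _root_.TensorProduct.map_tmul, mul'_apply]
  have key := sum_tmul_tmul_eq r rl rr
  have e1 : Ω (∑ i ∈ r.index, ∑ j ∈ (rl i).index,
      (rl i).left j ⊗ₜ[k] ((rl i).right j ⊗ₜ[k] r.right i)) = Gm (k := k) x := by
    rw [map_sum]
    calc ∑ i ∈ r.index, Ω (∑ j ∈ (rl i).index,
            (rl i).left j ⊗ₜ[k] ((rl i).right j ⊗ₜ[k] r.right i))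
        = ∑ i ∈ r.index, (∑ j ∈ (rl i).index,
            Coalgebra.comul (R := k) (antipode (R := k) ((rl i).left j)) *
              Coalgebra.comul (R := k) ((rl i).right j)) * Gm (k := k) (r.right i) := by
          refine Finset.sum_congr rfl fun i _ => ?_
          rw [map_sum, Finset.sum_mul]
          refine Finset.sum_congr rfl fun j _ => ?_
          rw [hΩ, mul_assoc]
      _ = ∑ i ∈ r.index, Coalgebra.counit (R := k) (r.left i) • Gm (k := k) (r.right i) := by
          refine Finset.sum_congr rfl fun i _ => ?_
          have h2 : ∑ j ∈ (rl i).index,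
              Coalgebra.comul (R := k) (antipode (R := k) ((rl i).left j)) *
                Coalgebra.comul (R := k) ((rl i).right j)
              = Coalgebra.counit (R := k) (r.left i) • (1 : A ⊗[k] A) := by
            calc ∑ j ∈ (rl i).index,
                  Coalgebra.comul (R := k) (antipode (R := k) ((rl i).left j)) *
                    Coalgebra.comul (R := k) ((rl i).right j)
                = Coalgebra.comul (R := k) (∑ j ∈ (rl i).index,
                    antipode (R := k) ((rl i).left j) * (rl i).right j) := by
                  rw [map_sum]
                  exact Finset.sum_congr rfl fun j _ => (Bialgebra.comul_mul _ _).symm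
              _ = Coalgebra.counit (R := k) (r.left i) • (1 : A ⊗[k] A) := by
                  rw [sum_antipode_mul_eq_smul (rl i), map_smul, Bialgebra.comul_one]
          rw [h2, smul_mul_assoc, one_mul]
      _ = Gm (k := k) x := by
          calc ∑ i ∈ r.index, Coalgebra.counit (R := k) (r.left i) • Gm (k := k) (r.right i)
              = Gm (k := k) (∑ i ∈ r.index,
                  Coalgebra.counit (R := k) (r.left i) • r.right i) := by
                rw [map_sum]
                exact Finset.sum_congr rfl fun i _ => (map_smul _ _ _).symm
            _ = Gm (k := k) x := by rw [repr_sum_eps_left r]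
  have e2 : Ω (∑ i ∈ r.index, ∑ j ∈ (rr i).index,
      r.left i ⊗ₜ[k] ((rr i).left j ⊗ₜ[k] (rr i).right j))
      = Coalgebra.comul (R := k) (antipode (R := k) x) := by
    rw [map_sum]
    calc ∑ i ∈ r.index, Ω (∑ j ∈ (rr i).index,
            r.left i ⊗ₜ[k] ((rr i).left j ⊗ₜ[k] (rr i).right j))
        = ∑ i ∈ r.index, Coalgebra.comul (R := k) (antipode (R := k) (r.left i)) *
            (∑ j ∈ (rr i).index,
              Coalgebra.comul (R := k) ((rr i).left j) * Gm (k := k) ((rr i).right j)) := by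
          refine Finset.sum_congr rfl fun i _ => ?_
          rw [map_sum, Finset.mul_sum]
          exact Finset.sum_congr rfl fun j _ => hΩ _ _ _
      _ = ∑ i ∈ r.index, Coalgebra.counit (R := k) (r.right i) •
            Coalgebra.comul (R := k) (antipode (R := k) (r.left i)) := by
          refine Finset.sum_congr rfl fun i _ => ?_
          rw [sum_comul_mul_G (rr i), mul_smul_comm, mul_one]
      _ = Coalgebra.comul (R := k) (antipode (R := k) x) := by
          calc ∑ i ∈ r.index, Coalgebra.counit (R := k) (r.right i) •
                Coalgebra.comul (R := k) (antipode (R := k) (r.left i))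
              = Coalgebra.comul (R := k) (antipode (R := k) (∑ i ∈ r.index,
                  Coalgebra.counit (R := k) (r.right i) • r.left i)) := by
                rw [map_sum (antipode (R := k)) _ r.index, map_sum]
                refine Finset.sum_congr rfl fun i _ => ?_
                rw [map_smul, map_smul]
            _ = _ := by rw [repr_sum_eps_right r]
  rw [← e2, ← key, e1]

/-- representation of `antipode x` obtained from one of `x` -/
noncomputable def antipodeRepr {x : A} (r : Repr k x ι) : Repr k (antipode (R := k) x) ι where
  index := r.index
  left := fun i => antipode (R := k) (r.right i)
  right := fun i => antipode (R := k) (r.left i)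
  eq := by rw [comul_antipode', Gm_apply r]

@[simp] lemma antipodeRepr_index {x : A} (r : Repr k x ι) : (antipodeRepr r).index = r.index := rfl
@[simp] lemma antipodeRepr_left {x : A} (r : Repr k x ι) (i) :
    (antipodeRepr r).left i = antipode (R := k) (r.right i) := rfl
@[simp] lemma antipodeRepr_right {x : A} (r : Repr k x ι) (i) :
    (antipodeRepr r).right i = antipode (R := k) (r.left i) := rfl

lemma antipode_mul' (a b : A) :
    antipode (R := k) (a * b) = antipode (R := k) b * antipode (R := k) a := by
  classical
  let ra : Repr k a (A × A) := ℛ k a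
  let rb : Repr k b (A × A) := ℛ k b
  let rac : ∀ i : ra.ι, Repr k (ra.left i) (A × A) := fun i => ℛ k _
  let rad : ∀ i : ra.ι, Repr k (ra.right i) (A × A) := fun i => ℛ k _
  let rbc : ∀ p : rb.ι, Repr k (rb.left p) (A × A) := fun p => ℛ k _
  let rbd : ∀ p : rb.ι, Repr k (rb.right p) (A × A) := fun p => ℛ k _
  have keya := sum_tmul_tmul_eq ra rac rad
  have keyb := sum_tmul_tmul_eq rb rbc rbd
  let Θ : A → A → A → (A ⊗[k] (A ⊗[k] A)) →ₗ[k] A := fun u v w =>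
    (LinearMap.mul' k A) ∘ₗ
      TensorProduct.map ((antipode (R := k)) ∘ₗ (LinearMap.mulLeft k u))
        ((LinearMap.mul' k A) ∘ₗ
          TensorProduct.map (LinearMap.mulLeft k v)
            ((LinearMap.mulRight k (antipode (R := k) w)) ∘ₗ (antipode (R := k))))
  have hΘ : ∀ u v w (y₁ y₂ y₃ : A), Θ u v w (y₁ ⊗ₜ[k] (y₂ ⊗ₜ[k] y₃)) =
      antipode (R := k) (u * y₁) *
        ((v * y₂) * (antipode (R := k) y₃ * antipode (R := k) w)) := by
    intros u v w y₁ y₂ y₃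
    simp only [Θ, comp_apply, _root_.TensorProduct.map_tmul, mul'_apply, mulLeft_apply,
      mulRight_apply]
  let Θ' : A → A → A → (A ⊗[k] (A ⊗[k] A)) →ₗ[k] A := fun y₁ y₂ y₃ =>
    (LinearMap.mul' k A) ∘ₗ
      TensorProduct.map ((antipode (R := k)) ∘ₗ (LinearMap.mulRight k y₁))
        ((LinearMap.mul' k A) ∘ₗ
          TensorProduct.map (LinearMap.mulRight k y₂)
            ((LinearMap.mulLeft k (antipode (R := k) y₃)) ∘ₗ (antipode (R := k))))
  have hΘ' : ∀ y₁ y₂ y₃ (x₁ x₂ x₃ : A), Θ' y₁ y₂ y₃ (x₁ ⊗ₜ[k] (x₂ ⊗ₜ[k] x₃)) =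
      antipode (R := k) (x₁ * y₁) *
        ((x₂ * y₂) * (antipode (R := k) y₃ * antipode (R := k) x₃)) := by
    intros y₁ y₂ y₃ x₁ x₂ x₃
    simp only [Θ', comp_apply, _root_.TensorProduct.map_tmul, mul'_apply, mulLeft_apply,
      mulRight_apply]
  let Tb : A ⊗[k] (A ⊗[k] A) := ∑ p ∈ rb.index, ∑ q ∈ (rbd p).index,
    rb.left p ⊗ₜ[k] ((rbd p).left q ⊗ₜ[k] (rbd p).right q)
  -- first evaluation
  have e1 : ∑ i ∈ ra.index, ∑ j ∈ (rad i).index,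
      Θ (ra.left i) ((rad i).left j) ((rad i).right j) Tb
      = ∑ i ∈ ra.index, ∑ j ∈ (rad i).index, ∑ p ∈ rb.index, ∑ q ∈ (rbd p).index,
        antipode (R := k) (ra.left i * rb.left p) *
          (((rad i).left j * (rbd p).left q) *
            (antipode (R := k) ((rbd p).right q) * antipode (R := k) ((rad i).right j))) := by
    refine Finset.sum_congr rfl fun i _ => Finset.sum_congr rfl fun j _ => ?_
    rw [map_sum]
    refine Finset.sum_congr rfl fun p _ => ?_
    rw [map_sum]
    exact Finset.sum_congr rfl fun q _ => hΘ _ _ _ _ _ _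
  have e2 : ∑ i ∈ ra.index, ∑ j ∈ (rad i).index, ∑ p ∈ rb.index, ∑ q ∈ (rbd p).index,
      antipode (R := k) (ra.left i * rb.left p) *
        (((rad i).left j * (rbd p).left q) *
          (antipode (R := k) ((rbd p).right q) * antipode (R := k) ((rad i).right j)))
      = ∑ i ∈ ra.index, ∑ j ∈ (rad i).index, ∑ p ∈ rb.index,
        Coalgebra.counit (R := k) (rb.right p) •
          (antipode (R := k) (ra.left i * rb.left p) *
            ((rad i).left j * antipode (R := k) ((rad i).right j))) := by
    refine Finset.sum_congr rfl fun i _ => Finset.sum_congr rfl fun j _ =>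
      Finset.sum_congr rfl fun p _ => ?_
    rw [← Finset.mul_sum]
    have h4 : ∑ q ∈ (rbd p).index, ((rad i).left j * (rbd p).left q) *
        (antipode (R := k) ((rbd p).right q) * antipode (R := k) ((rad i).right j))
        = Coalgebra.counit (R := k) (rb.right p) •
          ((rad i).left j * antipode (R := k) ((rad i).right j)) := by
      have h5 : ∀ q, ((rad i).left j * (rbd p).left q) *
          (antipode (R := k) ((rbd p).right q) * antipode (R := k) ((rad i).right j))
          = (rad i).left j * (((rbd p).left q * antipode (R := k) ((rbd p).right q)) *
            antipode (R := k) ((rad i).right j)) := by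
        intro q
        rw [mul_assoc, ← mul_assoc ((rbd p).left q)]
      rw [Finset.sum_congr rfl fun q _ => h5 q, ← Finset.mul_sum, ← Finset.sum_mul,
        sum_mul_antipode_eq_smul (rbd p), smul_mul_assoc, one_mul, mul_smul_comm]
    rw [h4, mul_smul_comm]
  have e3 : ∑ i ∈ ra.index, ∑ j ∈ (rad i).index, ∑ p ∈ rb.index,
      Coalgebra.counit (R := k) (rb.right p) •
        (antipode (R := k) (ra.left i * rb.left p) *
          ((rad i).left j * antipode (R := k) ((rad i).right j)))
      = ∑ i ∈ ra.index, ∑ p ∈ rb.index,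
        (Coalgebra.counit (R := k) (rb.right p) * Coalgebra.counit (R := k) (ra.right i)) •
          antipode (R := k) (ra.left i * rb.left p) := by
    refine Finset.sum_congr rfl fun i _ => ?_
    rw [Finset.sum_comm]
    refine Finset.sum_congr rfl fun p _ => ?_
    rw [← Finset.smul_sum, ← Finset.mul_sum, sum_mul_antipode_eq_smul (rad i),
      mul_smul_comm, mul_one, smul_smul]
  have e4 : ∑ i ∈ ra.index, ∑ p ∈ rb.index,
      (Coalgebra.counit (R := k) (rb.right p) * Coalgebra.counit (R := k) (ra.right i)) •
        antipode (R := k) (ra.left i * rb.left p)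
      = antipode (R := k) (a * b) := by
    have h6 : ∀ i, ∑ p ∈ rb.index,
        (Coalgebra.counit (R := k) (rb.right p) * Coalgebra.counit (R := k) (ra.right i)) •
          antipode (R := k) (ra.left i * rb.left p)
        = Coalgebra.counit (R := k) (ra.right i) • antipode (R := k) (ra.left i * b) := by
      intro i
      conv_rhs => rw [← repr_sum_eps_right rb]
      rw [Finset.mul_sum, map_sum, Finset.smul_sum]
      refine Finset.sum_congr rfl fun p _ => ?_
      rw [mul_smul_comm, map_smul, smul_smul, mul_comm]
    rw [Finset.sum_congr rfl fun i _ => h6 i]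
    conv_rhs => rw [← repr_sum_eps_right ra]
    rw [Finset.sum_mul, map_sum]
    refine Finset.sum_congr rfl fun i _ => ?_
    rw [smul_mul_assoc, map_smul]
  -- second evaluation
  have f1 : ∑ i ∈ ra.index, ∑ j ∈ (rad i).index,
      Θ (ra.left i) ((rad i).left j) ((rad i).right j) Tb
      = ∑ i ∈ ra.index, ∑ j ∈ (rad i).index, ∑ p ∈ rb.index, ∑ q ∈ (rbc p).index,
        antipode (R := k) (ra.left i * (rbc p).left q) *
          (((rad i).left j * (rbc p).right q) *
            (antipode (R := k) (rb.right p) * antipode (R := k) ((rad i).right j))) := by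
    refine Finset.sum_congr rfl fun i _ => Finset.sum_congr rfl fun j _ => ?_
    rw [show Tb = ∑ p ∈ rb.index, ∑ q ∈ (rbc p).index,
      (rbc p).left q ⊗ₜ[k] ((rbc p).right q ⊗ₜ[k] rb.right p) from keyb.symm]
    rw [map_sum]
    refine Finset.sum_congr rfl fun p _ => ?_
    rw [map_sum]
    exact Finset.sum_congr rfl fun q _ => hΘ _ _ _ _ _ _
  have f2 : ∑ i ∈ ra.index, ∑ j ∈ (rad i).index, ∑ p ∈ rb.index, ∑ q ∈ (rbc p).index,
      antipode (R := k) (ra.left i * (rbc p).left q) *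
        (((rad i).left j * (rbc p).right q) *
          (antipode (R := k) (rb.right p) * antipode (R := k) ((rad i).right j)))
      = ∑ p ∈ rb.index, ∑ q ∈ (rbc p).index, ∑ i ∈ ra.index, ∑ j ∈ (rad i).index,
        antipode (R := k) (ra.left i * (rbc p).left q) *
          (((rad i).left j * (rbc p).right q) *
            (antipode (R := k) (rb.right p) * antipode (R := k) ((rad i).right j))) := by
    rw [Finset.sum_congr rfl fun i (_ : i ∈ ra.index) => Finset.sum_comm, Finset.sum_comm]
    refine Finset.sum_congr rfl fun p _ => ?_
    rw [Finset.sum_comm]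
    exact Finset.sum_congr rfl fun q _ => Finset.sum_comm
  have f3 : ∑ p ∈ rb.index, ∑ q ∈ (rbc p).index, ∑ i ∈ ra.index, ∑ j ∈ (rad i).index,
      antipode (R := k) (ra.left i * (rbc p).left q) *
        (((rad i).left j * (rbc p).right q) *
          (antipode (R := k) (rb.right p) * antipode (R := k) ((rad i).right j)))
      = ∑ p ∈ rb.index, ∑ q ∈ (rbc p).index, ∑ i ∈ ra.index, ∑ j ∈ (rac i).index,
        antipode (R := k) ((rac i).left j * (rbc p).left q) *
          (((rac i).right j * (rbc p).right q) *
            (antipode (R := k) (rb.right p) * antipode (R := k) (ra.right i))) := by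
    refine Finset.sum_congr rfl fun p _ => Finset.sum_congr rfl fun q _ => ?_
    have h1 : ∑ i ∈ ra.index, ∑ j ∈ (rad i).index,
        antipode (R := k) (ra.left i * (rbc p).left q) *
          (((rad i).left j * (rbc p).right q) *
            (antipode (R := k) (rb.right p) * antipode (R := k) ((rad i).right j)))
        = Θ' ((rbc p).left q) ((rbc p).right q) (rb.right p)
            (∑ i ∈ ra.index, ∑ j ∈ (rad i).index,
              ra.left i ⊗ₜ[k] ((rad i).left j ⊗ₜ[k] (rad i).right j)) := by
      rw [map_sum]
      refine Finset.sum_congr rfl fun i _ => ?_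
      rw [map_sum]
      exact Finset.sum_congr rfl fun j _ => (hΘ' _ _ _ _ _ _).symm
    rw [h1, ← keya, map_sum]
    refine Finset.sum_congr rfl fun i _ => ?_
    rw [map_sum]
    exact Finset.sum_congr rfl fun j _ => hΘ' _ _ _ _ _ _
  have f4 : ∑ p ∈ rb.index, ∑ q ∈ (rbc p).index, ∑ i ∈ ra.index, ∑ j ∈ (rac i).index,
      antipode (R := k) ((rac i).left j * (rbc p).left q) *
        (((rac i).right j * (rbc p).right q) *
          (antipode (R := k) (rb.right p) * antipode (R := k) (ra.right i)))
      = ∑ p ∈ rb.index, ∑ i ∈ ra.index,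
        (Coalgebra.counit (R := k) (ra.left i) * Coalgebra.counit (R := k) (rb.left p)) •
          (antipode (R := k) (rb.right p) * antipode (R := k) (ra.right i)) := by
    refine Finset.sum_congr rfl fun p _ => ?_
    rw [Finset.sum_comm]
    refine Finset.sum_congr rfl fun i _ => ?_
    have h7 : ∀ (q : (rbc p).ι) (j : (rac i).ι),
        antipode (R := k) ((rac i).left j * (rbc p).left q) *
          (((rac i).right j * (rbc p).right q) *
            (antipode (R := k) (rb.right p) * antipode (R := k) (ra.right i)))
        = (antipode (R := k) ((rac i).left j * (rbc p).left q) *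
            ((rac i).right j * (rbc p).right q)) *
          (antipode (R := k) (rb.right p) * antipode (R := k) (ra.right i)) :=
      fun q j => (mul_assoc _ _ _).symm
    rw [Finset.sum_congr rfl fun q _ => Finset.sum_congr rfl fun j _ => h7 q j]
    rw [Finset.sum_congr rfl fun q (_ : q ∈ (rbc p).index) => (Finset.sum_mul _ _ _).symm,
      ← Finset.sum_mul]
    have h8 : ∑ q ∈ (rbc p).index, ∑ j ∈ (rac i).index,
        antipode (R := k) ((rac i).left j * (rbc p).left q) *
          ((rac i).right j * (rbc p).right q)
        = Coalgebra.counit (R := k) (ra.left i * rb.left p) • (1 : A) := by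
      rw [Finset.sum_comm, ← Finset.sum_product']
      exact sum_antipode_mul_eq_smul (R := k) (mulRepr (rac i) (rbc p))
    rw [show (∑ q ∈ (rbc p).index, ∑ j ∈ (rac i).index,
        antipode (R := k) ((rac i).left j * (rbc p).left q) *
          ((rac i).right j * (rbc p).right q)) * _ = _ from by rw [h8]]
    rw [Bialgebra.counit_mul, smul_mul_assoc, one_mul]
  have f5 : ∑ p ∈ rb.index, ∑ i ∈ ra.index,
      (Coalgebra.counit (R := k) (ra.left i) * Coalgebra.counit (R := k) (rb.left p)) •
        (antipode (R := k) (rb.right p) * antipode (R := k) (ra.right i))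
      = antipode (R := k) b * antipode (R := k) a := by
    have h10 : ∀ p, ∑ i ∈ ra.index,
        (Coalgebra.counit (R := k) (ra.left i) * Coalgebra.counit (R := k) (rb.left p)) •
          (antipode (R := k) (rb.right p) * antipode (R := k) (ra.right i))
        = Coalgebra.counit (R := k) (rb.left p) •
          (antipode (R := k) (rb.right p) * antipode (R := k) a) := by
      intro p
      conv_rhs => rw [← repr_sum_eps_left ra]
      rw [map_sum, Finset.mul_sum, Finset.smul_sum]
      refine Finset.sum_congr rfl fun i _ => ?_
      rw [map_smul, mul_smul_comm, smul_smul, mul_comm]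
    rw [Finset.sum_congr rfl fun p _ => h10 p]
    conv_rhs => rw [← repr_sum_eps_left rb]
    rw [map_sum, Finset.sum_mul]
    refine Finset.sum_congr rfl fun p _ => ?_
    rw [map_smul, smul_mul_assoc]
  exact (e1.trans (e2.trans (e3.trans e4))).symm.trans
    (f1.trans (f2.trans (f3.trans (f4.trans f5))))

section Integrals

variable (lam : A →ₗ[k] k)
variable (hlam : ∀ a : A, (TensorProduct.rid k A)
    ((LinearMap.lTensor A lam) (Coalgebra.comul (R := k) a)) = lam a • 1)

include hlam

lemma hlam_repr {a : A} (r : Repr k a ι) :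
    ∑ i ∈ r.index, lam (r.right i) • r.left i = lam a • (1 : A) := by
  have h := hlam a
  rw [← r.eq, map_sum, map_sum] at h
  simp only [lTensor_tmul, _root_.TensorProduct.rid_tmul] at h
  exact h

lemma star_lemma (a b : A) (ra : Repr k a ι) (rb : Repr k b κ) :
    ∑ p ∈ rb.index, lam (a * rb.right p) • rb.left p
      = ∑ i ∈ ra.index, lam (ra.right i * b) • antipode (R := k) (ra.left i) := by
  classical
  let rac : ∀ i : ra.ι, Repr k (ra.left i) (A × A) := fun i => ℛ k _
  let rad : ∀ i : ra.ι, Repr k (ra.right i) (A × A) := fun i => ℛ k _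
  have keya := sum_tmul_tmul_eq ra rac rad
  let Θ : rb.ι → (A ⊗[k] (A ⊗[k] A)) →ₗ[k] A := fun p =>
    (TensorProduct.rid k A).toLinearMap ∘ₗ
      (TensorProduct.map
        ((LinearMap.mul' k A) ∘ₗ
          TensorProduct.map (antipode (R := k)) (LinearMap.mulRight k (rb.left p)))
        (lam ∘ₗ LinearMap.mulRight k (rb.right p))) ∘ₗ
      (TensorProduct.assoc k A A A).symm.toLinearMap
  have hΘ : ∀ p (x₁ x₂ x₃ : A), Θ p (x₁ ⊗ₜ[k] (x₂ ⊗ₜ[k] x₃)) =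
      lam (x₃ * rb.right p) • (antipode (R := k) x₁ * (x₂ * rb.left p)) := by
    intro p x₁ x₂ x₃
    simp only [Θ, comp_apply, LinearEquiv.coe_coe, _root_.TensorProduct.assoc_symm_tmul,
      _root_.TensorProduct.map_tmul, mul'_apply, mulRight_apply, _root_.TensorProduct.rid_tmul]
  -- evaluate `∑ p, Θ p` on the left-nested triple
  have eL : ∑ p ∈ rb.index, Θ p (∑ i ∈ ra.index, ∑ j ∈ (rac i).index,
      (rac i).left j ⊗ₜ[k] ((rac i).right j ⊗ₜ[k] ra.right i))
      = ∑ p ∈ rb.index, lam (a * rb.right p) • rb.left p := by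
    refine Finset.sum_congr rfl fun p _ => ?_
    rw [map_sum]
    calc ∑ i ∈ ra.index, Θ p (∑ j ∈ (rac i).index,
            (rac i).left j ⊗ₜ[k] ((rac i).right j ⊗ₜ[k] ra.right i))
        = ∑ i ∈ ra.index, Coalgebra.counit (R := k) (ra.left i) •
            (lam (ra.right i * rb.right p) • rb.left p) := by
          refine Finset.sum_congr rfl fun i _ => ?_
          rw [map_sum]
          have : ∀ j, Θ p ((rac i).left j ⊗ₜ[k] ((rac i).right j ⊗ₜ[k] ra.right i))
              = lam (ra.right i * rb.right p) •
                ((antipode (R := k) ((rac i).left j) * (rac i).right j) * rb.left p) := by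
            intro j
            rw [hΘ, ← mul_assoc]
          rw [Finset.sum_congr rfl fun j _ => this j, ← Finset.smul_sum, ← Finset.sum_mul]
          rw [sum_antipode_mul_eq_smul (rac i), smul_mul_assoc, one_mul, smul_comm]
      _ = lam ((∑ i ∈ ra.index, Coalgebra.counit (R := k) (ra.left i) • ra.right i)
            * rb.right p) • rb.left p := by
          rw [Finset.sum_mul, map_sum, Finset.sum_smul]
          refine Finset.sum_congr rfl fun i _ => ?_
          rw [smul_mul_assoc, map_smul, smul_eq_mul, ← smul_smul]
      _ = lam (a * rb.right p) • rb.left p := by rw [repr_sum_eps_left ra]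
  -- evaluate `∑ p, Θ p` on the right-nested triple
  have eR : ∑ p ∈ rb.index, Θ p (∑ i ∈ ra.index, ∑ j ∈ (rad i).index,
      ra.left i ⊗ₜ[k] ((rad i).left j ⊗ₜ[k] (rad i).right j))
      = ∑ i ∈ ra.index, lam (ra.right i * b) • antipode (R := k) (ra.left i) := by
    calc ∑ p ∈ rb.index, Θ p (∑ i ∈ ra.index, ∑ j ∈ (rad i).index,
            ra.left i ⊗ₜ[k] ((rad i).left j ⊗ₜ[k] (rad i).right j))
        = ∑ p ∈ rb.index, ∑ i ∈ ra.index, ∑ j ∈ (rad i).index,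
            lam ((rad i).right j * rb.right p) •
              (antipode (R := k) (ra.left i) * ((rad i).left j * rb.left p)) := by
          refine Finset.sum_congr rfl fun p _ => ?_
          rw [map_sum]
          refine Finset.sum_congr rfl fun i _ => ?_
          rw [map_sum]
          exact Finset.sum_congr rfl fun j _ => hΘ p _ _ _
      _ = ∑ i ∈ ra.index, ∑ p ∈ rb.index, ∑ j ∈ (rad i).index,
            lam ((rad i).right j * rb.right p) •
              (antipode (R := k) (ra.left i) * ((rad i).left j * rb.left p)) := by
          rw [Finset.sum_comm]
      _ = ∑ i ∈ ra.index, antipode (R := k) (ra.left i) *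
            (∑ j ∈ (rad i).index, ∑ p ∈ rb.index,
              lam ((rad i).right j * rb.right p) • ((rad i).left j * rb.left p)) := by
          refine Finset.sum_congr rfl fun i _ => ?_
          rw [Finset.sum_comm, Finset.mul_sum]
          refine Finset.sum_congr rfl fun j _ => ?_
          rw [Finset.mul_sum]
          exact Finset.sum_congr rfl fun p _ => (mul_smul_comm _ _ _).symm
      _ = ∑ i ∈ ra.index, lam (ra.right i * b) • antipode (R := k) (ra.left i) := by
          refine Finset.sum_congr rfl fun i _ => ?_
          have h2 : ∑ j ∈ (rad i).index, ∑ p ∈ rb.index,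
              lam ((rad i).right j * rb.right p) • ((rad i).left j * rb.left p)
              = lam (ra.right i * b) • (1 : A) := by
            rw [← Finset.sum_product']
            exact hlam_repr lam hlam (mulRepr (rad i) rb)
          rw [h2, mul_smul_comm, mul_one]
  rw [← eL, keya, eR]

lemma expansion₁ (Λ : A) (hΛ : ∀ a : A, Λ * a = Coalgebra.counit (R := k) a • Λ)
    (hΛ1 : lam Λ = 1) (rΛ : Repr k Λ ι) (x : A) :
    ∑ i ∈ rΛ.index, lam (rΛ.right i * x) • antipode (R := k) (rΛ.left i) = x := by
  classical
  have h := star_lemma lam hlam Λ x rΛ (ℛ k x)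
  rw [← h]
  have : ∀ p, lam (Λ * (ℛ k x).right p) = Coalgebra.counit (R := k) ((ℛ k x).right p) := by
    intro p
    rw [hΛ, map_smul, smul_eq_mul, hΛ1, mul_one]
  rw [Finset.sum_congr rfl fun p _ => by rw [this p]]
  exact repr_sum_eps_right (ℛ k x)

lemma antipode_surjective (Λ : A) (hΛ : ∀ a : A, Λ * a = Coalgebra.counit (R := k) a • Λ)
    (hΛ1 : lam Λ = 1) : Function.Surjective ⇑(antipode (R := k) (A := A)) := by
  classical
  intro x
  refine ⟨∑ i ∈ (ℛ k Λ).index, lam ((ℛ k Λ).right i * x) • (ℛ k Λ).left i, ?_⟩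
  rw [map_sum]
  calc ∑ i ∈ (ℛ k Λ).index,
        antipode (R := k) (lam ((ℛ k Λ).right i * x) • (ℛ k Λ).left i)
      = ∑ i ∈ (ℛ k Λ).index,
          lam ((ℛ k Λ).right i * x) • antipode (R := k) ((ℛ k Λ).left i) := by
        exact Finset.sum_congr rfl fun i _ => map_smul _ _ _
    _ = x := expansion₁ lam hlam Λ hΛ hΛ1 (ℛ k Λ) x

lemma sLam_left_integral (Λ : A) (hΛ : ∀ a : A, Λ * a = Coalgebra.counit (R := k) a • Λ)
    (hΛ1 : lam Λ = 1) (a : A) :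
    a * antipode (R := k) Λ = Coalgebra.counit (R := k) a • antipode (R := k) Λ := by
  obtain ⟨c, hc⟩ := antipode_surjective lam hlam Λ hΛ hΛ1 a
  obtain ⟨b, hb⟩ := antipode_surjective lam hlam Λ hΛ hΛ1 c
  subst hc; subst hb
  rw [← antipode_mul', hΛ, map_smul]
  simp [counit_antipode']

lemma expansion₂ (Λ : A) (hΛ : ∀ a : A, Λ * a = Coalgebra.counit (R := k) a • Λ)
    (hΛ1 : lam Λ = 1) (rΛ : Repr k Λ ι) (x : A) :
    ∑ i ∈ rΛ.index, lam (x * antipode (R := k) (rΛ.left i)) • rΛ.right i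
      = lam (antipode (R := k) Λ) • x := by
  classical
  let rx : Repr k x (A × A) := ℛ k x
  let rc : ∀ i : rΛ.ι, Repr k (rΛ.left i) (A × A) := fun i => ℛ k _
  let rr : ∀ i : rΛ.ι, Repr k (rΛ.right i) (A × A) := fun i => ℛ k _
  have key := sum_tmul_tmul_eq rΛ rc rr
  -- step 1 : expand the coefficient via `hlam`
  have step1 : ∀ i, lam (x * antipode (R := k) (rΛ.left i)) • (1 : A)
      = ∑ m ∈ rx.index, ∑ j ∈ (rc i).index,
          lam (rx.right m * antipode (R := k) ((rc i).left j)) •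
            (rx.left m * antipode (R := k) ((rc i).right j)) := by
    intro i
    have h2 : ∑ m ∈ rx.index, ∑ j ∈ (rc i).index,
        lam (rx.right m * antipode (R := k) ((rc i).left j)) •
          (rx.left m * antipode (R := k) ((rc i).right j))
        = lam (x * antipode (R := k) (rΛ.left i)) • (1 : A) := by
      rw [← Finset.sum_product']
      exact hlam_repr lam hlam (mulRepr rx (antipodeRepr (rc i)))
    exact h2.symm
  have e1 : ∑ i ∈ rΛ.index, lam (x * antipode (R := k) (rΛ.left i)) • rΛ.right i
      = ∑ m ∈ rx.index, ∑ i ∈ rΛ.index, ∑ j ∈ (rc i).index,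
          lam (rx.right m * antipode (R := k) ((rc i).left j)) •
            (rx.left m * (antipode (R := k) ((rc i).right j) * rΛ.right i)) := by
    rw [Finset.sum_comm]
    refine Finset.sum_congr rfl fun i _ => ?_
    calc lam (x * antipode (R := k) (rΛ.left i)) • rΛ.right i
        = (lam (x * antipode (R := k) (rΛ.left i)) • (1 : A)) * rΛ.right i := by
          rw [smul_mul_assoc, one_mul]
      _ = ∑ m ∈ rx.index, ∑ j ∈ (rc i).index,
            lam (rx.right m * antipode (R := k) ((rc i).left j)) •
              (rx.left m * (antipode (R := k) ((rc i).right j) * rΛ.right i)) := by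
          rw [step1 i, Finset.sum_mul]
          refine Finset.sum_congr rfl fun m _ => ?_
          rw [Finset.sum_mul]
          refine Finset.sum_congr rfl fun j _ => ?_
          rw [smul_mul_assoc, mul_assoc]
  -- step 2 : apply `Ψ m` to the coassociativity identity
  let Ψ : rx.ι → (A ⊗[k] (A ⊗[k] A)) →ₗ[k] A := fun m =>
    (TensorProduct.lid k A).toLinearMap ∘ₗ
      TensorProduct.map (lam ∘ₗ (LinearMap.mulLeft k (rx.right m)) ∘ₗ (antipode (R := k)))
        ((LinearMap.mulLeft k (rx.left m)) ∘ₗ (LinearMap.mul' k A) ∘ₗ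
          (LinearMap.rTensor A (antipode (R := k))))
  have hΨ : ∀ m (u v w : A), Ψ m (u ⊗ₜ[k] (v ⊗ₜ[k] w)) =
      lam (rx.right m * antipode (R := k) u) •
        (rx.left m * (antipode (R := k) v * w)) := by
    intro m u v w
    simp only [Ψ, comp_apply, LinearEquiv.coe_coe, _root_.TensorProduct.map_tmul,
      rTensor_tmul, mul'_apply, mulLeft_apply, _root_.TensorProduct.lid_tmul, id_coe, id_eq]
  have e2 : ∀ m, ∑ i ∈ rΛ.index, ∑ j ∈ (rc i).index,
      lam (rx.right m * antipode (R := k) ((rc i).left j)) •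
        (rx.left m * (antipode (R := k) ((rc i).right j) * rΛ.right i))
      = ∑ i ∈ rΛ.index, ∑ j ∈ (rr i).index,
          lam (rx.right m * antipode (R := k) (rΛ.left i)) •
            (rx.left m * (antipode (R := k) ((rr i).left j) * (rr i).right j)) := by
    intro m
    have hL : ∑ i ∈ rΛ.index, ∑ j ∈ (rc i).index,
        lam (rx.right m * antipode (R := k) ((rc i).left j)) •
          (rx.left m * (antipode (R := k) ((rc i).right j) * rΛ.right i))
        = Ψ m (∑ i ∈ rΛ.index, ∑ j ∈ (rc i).index,
            (rc i).left j ⊗ₜ[k] ((rc i).right j ⊗ₜ[k] rΛ.right i)) := by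
      rw [map_sum]
      refine Finset.sum_congr rfl fun i _ => ?_
      rw [map_sum]
      exact Finset.sum_congr rfl fun j _ => (hΨ m _ _ _).symm
    rw [hL, key, map_sum]
    refine Finset.sum_congr rfl fun i _ => ?_
    rw [map_sum]
    exact Finset.sum_congr rfl fun j _ => hΨ m _ _ _
  -- step 3 : collapse
  have e3 : ∀ m, ∑ i ∈ rΛ.index, ∑ j ∈ (rr i).index,
      lam (rx.right m * antipode (R := k) (rΛ.left i)) •
        (rx.left m * (antipode (R := k) ((rr i).left j) * (rr i).right j))
      = (Coalgebra.counit (R := k) (rx.right m) * lam (antipode (R := k) Λ)) • rx.left m := by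
    intro m
    have h3 : ∀ i, ∑ j ∈ (rr i).index,
        lam (rx.right m * antipode (R := k) (rΛ.left i)) •
          (rx.left m * (antipode (R := k) ((rr i).left j) * (rr i).right j))
        = Coalgebra.counit (R := k) (rΛ.right i) •
            (lam (rx.right m * antipode (R := k) (rΛ.left i)) • rx.left m) := by
      intro i
      rw [← Finset.smul_sum, ← Finset.mul_sum, sum_antipode_mul_eq_smul (rr i),
        mul_smul_comm, mul_one, smul_comm]
    rw [Finset.sum_congr rfl fun i _ => h3 i]
    have h4 : ∑ i ∈ rΛ.index, Coalgebra.counit (R := k) (rΛ.right i) •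
        (lam (rx.right m * antipode (R := k) (rΛ.left i)) • rx.left m)
        = lam (rx.right m * antipode (R := k)
            (∑ i ∈ rΛ.index, Coalgebra.counit (R := k) (rΛ.right i) • rΛ.left i)) • rx.left m := by
      rw [map_sum (antipode (R := k)) _ rΛ.index, Finset.mul_sum, map_sum, Finset.sum_smul]
      refine Finset.sum_congr rfl fun i _ => ?_
      rw [map_smul, mul_smul_comm, map_smul, smul_eq_mul, ← smul_smul]
    rw [h4, repr_sum_eps_right rΛ, sLam_left_integral lam hlam Λ hΛ hΛ1, map_smul, smul_eq_mul]
  rw [e1, Finset.sum_congr rfl fun m _ => (e2 m).trans (e3 m)]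
  calc ∑ m ∈ rx.index,
        (Coalgebra.counit (R := k) (rx.right m) * lam (antipode (R := k) Λ)) • rx.left m
      = lam (antipode (R := k) Λ) • ∑ m ∈ rx.index,
          Coalgebra.counit (R := k) (rx.right m) • rx.left m := by
        rw [Finset.smul_sum]
        refine Finset.sum_congr rfl fun m _ => ?_
        rw [smul_smul, mul_comm]
    _ = lam (antipode (R := k) Λ) • x := by rw [repr_sum_eps_right rx]

lemma lam_antipode_lam (Λ : A) (hΛ : ∀ a : A, Λ * a = Coalgebra.counit (R := k) a • Λ)
    (hΛ1 : lam Λ = 1) : lam (antipode (R := k) Λ) = 1 := by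
  classical
  have h := expansion₂ lam hlam Λ hΛ hΛ1 (ℛ k Λ) Λ
  have h2 : ∀ i ∈ (ℛ k Λ).index, lam (Λ * antipode (R := k) ((ℛ k Λ).left i)) • (ℛ k Λ).right i
      = Coalgebra.counit (R := k) ((ℛ k Λ).left i) • (ℛ k Λ).right i := by
    intro i _
    rw [hΛ, map_smul, counit_antipode', smul_eq_mul, hΛ1, mul_one]
  rw [Finset.sum_congr rfl h2, repr_sum_eps_left (ℛ k Λ)] at h
  have h3 := congrArg lam h.symm
  rw [map_smul, smul_eq_mul, hΛ1, mul_one] at h3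
  exact h3

lemma expansion₃ (Λ : A) (hΛ : ∀ a : A, Λ * a = Coalgebra.counit (R := k) a • Λ)
    (hΛ1 : lam Λ = 1) (rΛ : Repr k Λ ι) (x : A) :
    ∑ i ∈ rΛ.index, lam (x * antipode (R := k) (rΛ.left i)) • rΛ.right i = x := by
  rw [expansion₂ lam hlam Λ hΛ hΛ1 rΛ x, lam_antipode_lam lam hlam Λ hΛ hΛ1, one_smul]

end Integrals

end HopfAux

/-- Let `A` be a finite-dimensional Hopf algebra over a field `k`, `λ` a
left integral in the dual and `Λ` a right integral with `λ(Λ) = 1`.  Then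
`λ(1) ε(Λ) = Trace(S²)`; consequently the invariant of the trivial genus-1 handlebody-knot,
`λ(S(Λ₍₁₎) Λ₍₂₎)`, equals `Trace(S²)`, and equals `(dim_k A) • 1` when `S` is an
involution. -/
theorem invariant_trivial_handlebody_knot (k A : Type*) [Field k] [Ring A] [HopfAlgebra k A]
    [FiniteDimensional k A]
    (lam : A →ₗ[k] k)
    (hlam : ∀ a : A, (TensorProduct.rid k A)
        ((LinearMap.lTensor A lam) (Coalgebra.comul (R := k) a)) = lam a • 1)
    (Λ : A) (hΛ : ∀ a : A, Λ * a = Coalgebra.counit (R := k) a • Λ)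
    (hΛ1 : lam Λ = 1) :
    lam 1 * Coalgebra.counit (R := k) Λ =
      LinearMap.trace k A (HopfAlgebra.antipode (R := k) ∘ₗ HopfAlgebra.antipode (R := k)) ∧
    lam ((LinearMap.mul' k A)
        (TensorProduct.map (HopfAlgebra.antipode (R := k)) LinearMap.id
          (Coalgebra.comul (R := k) Λ))) =
      LinearMap.trace k A (HopfAlgebra.antipode (R := k) ∘ₗ HopfAlgebra.antipode (R := k)) ∧
    ((∀ a : A, HopfAlgebra.antipode (R := k) (HopfAlgebra.antipode (R := k) a) = a) →
      lam ((LinearMap.mul' k A)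
          (TensorProduct.map (HopfAlgebra.antipode (R := k)) LinearMap.id
            (Coalgebra.comul (R := k) Λ))) = (Module.finrank k A : k)) := by
  classical
  set rΛ : Coalgebra.Repr k Λ (A × A) := Coalgebra.Repr.arbitrary k Λ with hrΛ
  have exp : ∀ x : A, ∑ i ∈ rΛ.index,
      lam (x * HopfAlgebra.antipode (R := k) (rΛ.left i)) • rΛ.right i = x :=
    fun x => HopfAux.expansion₃ lam hlam Λ hΛ hΛ1 rΛ x
  -- the trace formula coming from the dual bases
  have htr : ∀ f : A →ₗ[k] A, LinearMap.trace k A f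
      = ∑ i ∈ rΛ.index,
          lam (f (rΛ.right i) * HopfAlgebra.antipode (R := k) (rΛ.left i)) := by
    intro f
    have hid : (dualTensorHom k A A) (∑ i ∈ rΛ.index,
        (lam ∘ₗ LinearMap.mulRight k (HopfAlgebra.antipode (R := k) (rΛ.left i)))
          ⊗ₜ[k] f (rΛ.right i)) = f := by
      apply LinearMap.ext
      intro x
      rw [map_sum, LinearMap.sum_apply]
      calc ∑ i ∈ rΛ.index, (dualTensorHom k A A
              ((lam ∘ₗ LinearMap.mulRight k (HopfAlgebra.antipode (R := k) (rΛ.left i)))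
                ⊗ₜ[k] f (rΛ.right i))) x
          = ∑ i ∈ rΛ.index, lam (x * HopfAlgebra.antipode (R := k) (rΛ.left i)) •
              f (rΛ.right i) := by
            refine Finset.sum_congr rfl fun i _ => ?_
            rw [dualTensorHom_apply, LinearMap.comp_apply, LinearMap.mulRight_apply]
        _ = f (∑ i ∈ rΛ.index,
              lam (x * HopfAlgebra.antipode (R := k) (rΛ.left i)) • rΛ.right i) := by
            rw [map_sum]
            exact Finset.sum_congr rfl fun i _ => (map_smul _ _ _).symm
        _ = f x := by rw [exp x]
    calc LinearMap.trace k A f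
        = LinearMap.trace k A ((dualTensorHom k A A) (∑ i ∈ rΛ.index,
            (lam ∘ₗ LinearMap.mulRight k (HopfAlgebra.antipode (R := k) (rΛ.left i)))
              ⊗ₜ[k] f (rΛ.right i))) := by rw [hid]
      _ = contractLeft k A (∑ i ∈ rΛ.index,
            (lam ∘ₗ LinearMap.mulRight k (HopfAlgebra.antipode (R := k) (rΛ.left i)))
              ⊗ₜ[k] f (rΛ.right i)) :=
          LinearMap.congr_fun (LinearMap.trace_eq_contract k A) _
      _ = ∑ i ∈ rΛ.index,
            lam (f (rΛ.right i) * HopfAlgebra.antipode (R := k) (rΛ.left i)) := by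
          rw [map_sum]
          refine Finset.sum_congr rfl fun i _ => ?_
          rw [contractLeft_apply, LinearMap.comp_apply, LinearMap.mulRight_apply]
  have key1 : LinearMap.trace k A
      (HopfAlgebra.antipode (R := k) ∘ₗ HopfAlgebra.antipode (R := k))
      = lam 1 * Coalgebra.counit (R := k) Λ := by
    rw [htr]
    calc ∑ i ∈ rΛ.index,
          lam ((HopfAlgebra.antipode (R := k) ∘ₗ HopfAlgebra.antipode (R := k)) (rΛ.right i) *
            HopfAlgebra.antipode (R := k) (rΛ.left i))
        = ∑ i ∈ rΛ.index, lam (HopfAlgebra.antipode (R := k)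
            (rΛ.left i * HopfAlgebra.antipode (R := k) (rΛ.right i))) := by
          refine Finset.sum_congr rfl fun i _ => ?_
          rw [LinearMap.comp_apply, HopfAux.antipode_mul']
      _ = lam (HopfAlgebra.antipode (R := k) (∑ i ∈ rΛ.index,
            rΛ.left i * HopfAlgebra.antipode (R := k) (rΛ.right i))) := by
          rw [map_sum, map_sum]
      _ = lam 1 * Coalgebra.counit (R := k) Λ := by
          rw [HopfAlgebra.sum_mul_antipode_eq_smul rΛ, map_smul, map_smul,
            HopfAux.antipode_one', smul_eq_mul, mul_comm]
  have key2 : lam ((LinearMap.mul' k A)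
      (TensorProduct.map (HopfAlgebra.antipode (R := k)) LinearMap.id
        (Coalgebra.comul (R := k) Λ))) = lam 1 * Coalgebra.counit (R := k) Λ := by
    rw [show TensorProduct.map (HopfAlgebra.antipode (R := k) (A := A)) LinearMap.id
        = LinearMap.rTensor A (HopfAlgebra.antipode (R := k)) from rfl]
    rw [HopfAlgebra.mul_antipode_rTensor_comul_apply, Algebra.algebraMap_eq_smul_one,
      map_smul, smul_eq_mul, mul_comm]
  refine ⟨key1.symm, key2.trans key1.symm, fun h => ?_⟩
  have hSS : (HopfAlgebra.antipode (R := k) (A := A)) ∘ₗ HopfAlgebra.antipode (R := k)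
      = LinearMap.id := LinearMap.ext fun a => by
    rw [LinearMap.comp_apply, h a, LinearMap.id_apply]
  rw [key2.trans key1.symm, hSS, LinearMap.trace_id]
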